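/- Let r ≥ 1 and let G be a B_{r+1}-free graph on n vertices with ρ(G) > r. Let x be a nonnegative eigenvector of the adjacency matrix of G for the eigenvalue ρ(G), let u* be a vertex where x attains its maximum entry (with x_{u*} > 0), and set A = N_G(u*) and B = V(G) \ (A ∪ {u*}). Then for every edge u₁u₂ of G with u₁, u₂ ∈ A, one has x_{u₁} + x_{u₂} ≤ ((|B| + r + 1)/(ρ(G) − r)) · x_{u*}. -/

import Mathlib

open SimpleGraph Finset

attribute [local instance] Classical.propDecidable

/-- The spectral radius (largest adjacency eigenvalue) of a graph on `Fin n`. -/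
noncomputable def adjSpectralRadius {n : ℕ} (G : SimpleGraph (Fin n)) : ℝ :=
  sSup (spectrum ℝ (G.adjMatrix ℝ))

/-- `G` contains a copy of `H` (a subgraph isomorphic to `H`). -/
def Contains {α β : Type*} (G : SimpleGraph α) (H : SimpleGraph β) : Prop :=
  ∃ f : β ↪ α, ∀ a b, H.Adj a b → G.Adj (f a) (f b)

/-- The book `B_s`: `s` triangles sharing a common edge, i.e. `K_{2,s}` plus the
edge inside the part of size two. -/
def book (s : ℕ) : SimpleGraph (Fin 2 ⊕ Fin s) :=
  SimpleGraph.fromRel (fun x _ => x.isLeft = true)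

/-- The theta graph `θ_{r+1} = θ(1,2,r+1)`: vertices `0,…,r+1` form a path of length
`r+1`, the edge `0 ~ (r+1)`, and vertex `r+2` is adjacent to `0` and `r+1`. -/
def theta (r : ℕ) : SimpleGraph (Fin (r + 3)) :=
  SimpleGraph.fromRel (fun x y =>
    (x.val + 1 = y.val ∧ y.val ≤ r + 1) ∨
    (x.val = 0 ∧ y.val = r + 1) ∨
    (x.val = r + 2 ∧ (y.val = 0 ∨ y.val = r + 1)))

/-- The number of edges of a graph. -/
noncomputable def edgeCount {V : Type*} (G : SimpleGraph V) : ℕ := G.edgeSet.ncard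

/-- The number of ordered pairs `(a,b) ∈ s × t` with `a ~ b`.  For disjoint `s` and `t`
this is the number `e(s,t)` of edges between `s` and `t`; for `s = t` it is `2·e(s)`. -/
noncomputable def ordPairs {V : Type*} (G : SimpleGraph V) (s t : Finset V) : ℕ :=
  ((s ×ˢ t).filter fun p => G.Adj p.1 p.2).card

/-- The number of edges inside a vertex subset `s`. -/
noncomputable def edgesIn {V : Type*} (G : SimpleGraph V) (s : Finset V) : ℕ :=
  (G.induce (s : Set V)).edgeSet.ncard

lemma common_le (r n : ℕ) (G : SimpleGraph (Fin n))
    (hfree : ¬ Contains G (book (r + 1))) {a b : Fin n} (hab : G.Adj a b) :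
    (G.neighborFinset a ∩ G.neighborFinset b).card ≤ r := by
  by_contra h
  push_neg at h
  obtain ⟨D, hD, hcard⟩ := Finset.exists_subset_card_eq h
  set e : Fin (r + 1) → Fin n := fun i => (D.orderIsoOfFin hcard i : Fin n) with he
  have heinj : Function.Injective e := fun i j hij => by
    simpa using (D.orderIsoOfFin hcard).injective (Subtype.ext hij)
  have hmem : ∀ i, G.Adj a (e i) ∧ G.Adj b (e i) := by
    intro i
    have : (e i) ∈ D := (D.orderIsoOfFin hcard i).2
    have := hD this
    simp only [Finset.mem_inter, mem_neighborFinset] at this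
    exact this
  have hea : ∀ i, e i ≠ a := fun i hia => G.irrefl (hia ▸ (hmem i).1)
  have heb : ∀ i, e i ≠ b := fun i hib => G.irrefl (hib ▸ (hmem i).2)
  apply hfree
  refine ⟨⟨Sum.elim (fun i => if i = 0 then a else b) e, ?_⟩, ?_⟩
  · rintro (i | i) (j | j) hij <;> simp only [Sum.elim_inl, Sum.elim_inr] at hij
    · congr 1
      fin_cases i <;> fin_cases j <;> simp_all <;> exact absurd hij hab.ne <;> exact absurd hij.symm hab.ne
    · exfalso
      by_cases hi : i = 0
      · exact hea j (by simp [hi] at hij; exact hij.symm)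
      · exact heb j (by simp [hi] at hij; exact hij.symm)
    · exfalso
      by_cases hj : j = 0
      · exact hea i (by simp [hj] at hij; exact hij)
      · exact heb i (by simp [hj] at hij; exact hij)
    · exact congrArg Sum.inr (heinj hij)
  · rintro (i | i) (j | j) hadj <;>
      simp only [book, SimpleGraph.fromRel_adj, Sum.isLeft_inl, Sum.isLeft_inr] at hadj
    · obtain ⟨hne, -⟩ := hadj
      have hij : i ≠ j := fun hh => hne (by rw [hh])
      change G.Adj ((fun i : Fin 2 => if i = 0 then a else b) i) ((fun i : Fin 2 => if i = 0 then a else b) j)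
      fin_cases i <;> fin_cases j <;> simp_all <;> first | exact hab | exact hab.symm
    · change G.Adj ((fun i : Fin 2 => if i = 0 then a else b) i) (e j)
      by_cases hi : i = 0
      · simpa [hi] using (hmem j).1
      · simpa [hi] using (hmem j).2
    · change G.Adj (e i) ((fun i : Fin 2 => if i = 0 then a else b) j)
      by_cases hj : j = 0
      · simpa [hj] using ((hmem i).1).symm
      · simpa [hj] using ((hmem i).2).symm
    · simp at hadj

/-- Claim 3.3: in a `B_{r+1}`-free graph with `ρ(G) > r`, for a nonnegative eigenvector
`x` with maximum entry at `u*`, `A = N_G(u*)`, `B = V ∖ (A ∪ {u*})`, every edge `u₁u₂`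
inside `A` satisfies `x_{u₁} + x_{u₂} ≤ ((|B| + r + 1)/(ρ(G) - r))·x_{u*}`. -/
theorem stmt16 (r n : ℕ) (hr : 1 ≤ r) (G : SimpleGraph (Fin n))
    (hfree : ¬ Contains G (book (r + 1)))
    (hρ : (r : ℝ) < adjSpectralRadius G)
    (x : Fin n → ℝ) (hx : (G.adjMatrix ℝ).mulVec x = adjSpectralRadius G • x)
    (hnn : ∀ i, 0 ≤ x i) (u : Fin n) (hmax : ∀ i, x i ≤ x u) (hpos : 0 < x u)
    (u₁ u₂ : Fin n) (h₁ : u₁ ∈ G.neighborFinset u) (h₂ : u₂ ∈ G.neighborFinset u)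
    (hadj : G.Adj u₁ u₂) :
    x u₁ + x u₂ ≤
      (((Finset.univ \ insert u (G.neighborFinset u)).card : ℝ) + r + 1) /
        (adjSpectralRadius G - r) * x u := by
  classical
  set ρ := adjSpectralRadius G with hρdef
  have heig : ∀ v : Fin n, ∑ w ∈ G.neighborFinset v, x w = ρ * x v := by
    intro v
    have h1 : (G.adjMatrix ℝ).mulVec x v = (ρ • x) v := by rw [hx]
    rw [SimpleGraph.adjMatrix_mulVec_apply] at h1
    simpa using h1
  set A := G.neighborFinset u with hA
  set Bc : ℝ := ((Finset.univ \ insert u A).card : ℝ) with hBc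
  set E : Finset (Fin n × Fin n) := (A ×ˢ A).filter (fun p => G.Adj p.1 p.2) with hE
  have hne : (u₁, u₂) ∈ E := by
    simp only [hE, Finset.mem_filter, Finset.mem_product]
    exact ⟨⟨h₁, h₂⟩, hadj⟩
  obtain ⟨p, hpE, hpmax⟩ := Finset.exists_max_image E (fun p => x p.1 + x p.2) ⟨_, hne⟩
  obtain ⟨⟨hv₁, hv₂⟩, hv⟩ : (p.1 ∈ A ∧ p.2 ∈ A) ∧ G.Adj p.1 p.2 := by
    simpa only [hE, Finset.mem_filter, Finset.mem_product] using hpE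
  set v₁ := p.1 with hv₁def
  set v₂ := p.2 with hv₂def
  have hρr : (0 : ℝ) < ρ - r := by linarith
  have hmono : x u₁ + x u₂ ≤ x v₁ + x v₂ := hpmax _ hne
  -- the per-endpoint estimate
  have main : ∀ a b : Fin n, a ∈ A → b ∈ A → G.Adj a b →
      (∀ w ∈ A, G.Adj a w → x w ≤ x b) →
      ρ * x a ≤ x u + x b + ((r : ℝ) - 1) * x b +
        ∑ w ∈ G.neighborFinset a \ insert u A, x w := by
    intro a b haA hbA hab hwb
    have hua : G.Adj u a := (mem_neighborFinset G u a).1 haA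
    have huNa : u ∈ G.neighborFinset a := (mem_neighborFinset G a u).2 hua.symm
    have hsplit : ∑ w ∈ G.neighborFinset a ∩ insert u A, x w
        + ∑ w ∈ G.neighborFinset a \ insert u A, x w = ρ * x a := by
      rw [Finset.sum_inter_add_sum_sdiff]; exact heig a
    have hIeq : G.neighborFinset a ∩ insert u A = insert u (A ∩ G.neighborFinset a) := by
      rw [Finset.inter_comm, Finset.insert_inter_of_mem huNa]
    have huA : u ∉ A := by simp [hA]
    have hsum1 : ∑ w ∈ G.neighborFinset a ∩ insert u A, x w
        = x u + ∑ w ∈ A ∩ G.neighborFinset a, x w := by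
      rw [hIeq, Finset.sum_insert (by simp [huA])]
    have hbmem : b ∈ A ∩ G.neighborFinset a := by
      simp only [Finset.mem_inter]
      exact ⟨hbA, (mem_neighborFinset G a b).2 hab⟩
    have hsum2 : ∑ w ∈ A ∩ G.neighborFinset a, x w
        = x b + ∑ w ∈ (A ∩ G.neighborFinset a).erase b, x w := by
      rw [add_comm, Finset.sum_erase_add _ _ hbmem]
    have hcard : (A ∩ G.neighborFinset a).card ≤ r := common_le r n G hfree hua
    have hcarde : (((A ∩ G.neighborFinset a).erase b).card : ℝ) ≤ (r : ℝ) - 1 := by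
      have h1 : ((A ∩ G.neighborFinset a).erase b).card = (A ∩ G.neighborFinset a).card - 1 :=
        Finset.card_erase_of_mem hbmem
      have h2 : 1 ≤ (A ∩ G.neighborFinset a).card := Finset.card_pos.2 ⟨b, hbmem⟩
      have : ((A ∩ G.neighborFinset a).erase b).card + 1 ≤ r := by omega
      have := Nat.cast_le (α := ℝ) |>.2 this
      push_cast at this
      linarith
    have hsum3 : ∑ w ∈ (A ∩ G.neighborFinset a).erase b, x w ≤ ((r : ℝ) - 1) * x b := by
      have hble : ∀ w ∈ (A ∩ G.neighborFinset a).erase b, x w ≤ x b := by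
        intro w hw
        obtain ⟨-, hwA, hwNa⟩ := by
          simpa only [Finset.mem_erase, Finset.mem_inter] using hw
        exact hwb w hwA ((mem_neighborFinset G a w).1 hwNa)
      calc ∑ w ∈ (A ∩ G.neighborFinset a).erase b, x w
          ≤ ((A ∩ G.neighborFinset a).erase b).card • x b :=
            Finset.sum_le_card_nsmul _ _ _ hble
        _ = (((A ∩ G.neighborFinset a).erase b).card : ℝ) * x b := by
            rw [nsmul_eq_mul]
        _ ≤ ((r : ℝ) - 1) * x b := by
            apply mul_le_mul_of_nonneg_right hcarde (hnn b)
    linarith [hsplit, hsum1, hsum2, hsum3]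
  -- apply to both endpoints of the maximal edge
  have hw₁ : ∀ w ∈ A, G.Adj v₁ w → x w ≤ x v₂ := by
    intro w hwA hw
    have := hpmax (v₁, w) (by
      simp only [hE, Finset.mem_filter, Finset.mem_product]
      exact ⟨⟨hv₁, hwA⟩, hw⟩)
    simpa using this
  have hw₂ : ∀ w ∈ A, G.Adj v₂ w → x w ≤ x v₁ := by
    intro w hwA hw
    have := hpmax (v₂, w) (by
      simp only [hE, Finset.mem_filter, Finset.mem_product]
      exact ⟨⟨hv₂, hwA⟩, hw⟩)
    have h' : x v₂ + x w ≤ x v₁ + x v₂ := this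
    linarith
  have m1 := main v₁ v₂ hv₁ hv₂ hv hw₁
  have m2 := main v₂ v₁ hv₂ hv₁ hv.symm hw₂
  -- the B part
  set B₁ := G.neighborFinset v₁ \ insert u A with hB₁
  set B₂ := G.neighborFinset v₂ \ insert u A with hB₂
  have bB : ∑ w ∈ B₁, x w + ∑ w ∈ B₂, x w ≤ (Bc + ((r : ℝ) - 1)) * x u := by
    have hsplit : ∑ w ∈ B₁ ∪ B₂, x w + ∑ w ∈ B₁ ∩ B₂, x w
        = ∑ w ∈ B₁, x w + ∑ w ∈ B₂, x w := Finset.sum_union_inter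
    have hsub : B₁ ∪ B₂ ⊆ Finset.univ \ insert u A := by
      apply Finset.union_subset <;>
        exact Finset.sdiff_subset_sdiff (Finset.subset_univ _) (le_refl _)
    have h1 : ∑ w ∈ B₁ ∪ B₂, x w ≤ Bc * x u := by
      calc ∑ w ∈ B₁ ∪ B₂, x w ≤ (B₁ ∪ B₂).card • x u :=
            Finset.sum_le_card_nsmul _ _ _ (fun w _ => hmax w)
        _ = ((B₁ ∪ B₂).card : ℝ) * x u := by rw [nsmul_eq_mul]
        _ ≤ Bc * x u := by
            apply mul_le_mul_of_nonneg_right _ (le_of_lt hpos)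
            exact_mod_cast Nat.cast_le.2 (Finset.card_le_card hsub)
    have huNN : u ∈ G.neighborFinset v₁ ∩ G.neighborFinset v₂ := by
      simp only [Finset.mem_inter, mem_neighborFinset]
      exact ⟨((mem_neighborFinset G u v₁).1 hv₁).symm, ((mem_neighborFinset G u v₂).1 hv₂).symm⟩
    have hsub2 : B₁ ∩ B₂ ⊆ (G.neighborFinset v₁ ∩ G.neighborFinset v₂).erase u := by
      intro w hw
      simp only [hB₁, hB₂, Finset.mem_inter, Finset.mem_sdiff, Finset.mem_insert] at hw
      simp only [Finset.mem_erase, Finset.mem_inter]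
      exact ⟨fun h => hw.1.2 (Or.inl h), hw.1.1, hw.2.1⟩
    have hcard2 : ((B₁ ∩ B₂).card : ℝ) ≤ (r : ℝ) - 1 := by
      have e1 : ((G.neighborFinset v₁ ∩ G.neighborFinset v₂).erase u).card
          = (G.neighborFinset v₁ ∩ G.neighborFinset v₂).card - 1 :=
        Finset.card_erase_of_mem huNN
      have e2 : (G.neighborFinset v₁ ∩ G.neighborFinset v₂).card ≤ r :=
        common_le r n G hfree hv
      have e3 : 1 ≤ (G.neighborFinset v₁ ∩ G.neighborFinset v₂).card :=
        Finset.card_pos.2 ⟨u, huNN⟩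
      have e4 : (B₁ ∩ B₂).card ≤ ((G.neighborFinset v₁ ∩ G.neighborFinset v₂).erase u).card :=
        Finset.card_le_card hsub2
      have : (B₁ ∩ B₂).card + 1 ≤ r := by omega
      have := Nat.cast_le (α := ℝ) |>.2 this
      push_cast at this
      linarith
    have h2 : ∑ w ∈ B₁ ∩ B₂, x w ≤ ((r : ℝ) - 1) * x u := by
      calc ∑ w ∈ B₁ ∩ B₂, x w ≤ (B₁ ∩ B₂).card • x u :=
            Finset.sum_le_card_nsmul _ _ _ (fun w _ => hmax w)
        _ = ((B₁ ∩ B₂).card : ℝ) * x u := by rw [nsmul_eq_mul]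
        _ ≤ ((r : ℝ) - 1) * x u := mul_le_mul_of_nonneg_right hcard2 (le_of_lt hpos)
    linarith
  have key : (ρ - r) * (x v₁ + x v₂) ≤ (Bc + r + 1) * x u := by nlinarith [m1, m2, bB]
  have h2 : x v₁ + x v₂ ≤ (Bc + (r : ℝ) + 1) / (ρ - r) * x u := by
    rw [div_mul_eq_mul_div, le_div_iff₀ hρr]
    calc (x v₁ + x v₂) * (ρ - r) = (ρ - r) * (x v₁ + x v₂) := by ring
    _ ≤ (Bc + r + 1) * x u := key
  linarith
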